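/- (Corollary 1, Property 6) Let C be an initial configuration of the BRP in which every stack is nonempty, and let V₁, …, V_k be pairwise disjoint virtual layers of C, each satisfying the conditions of Property 5. Then every feasible move sequence for C contains at least k non-BG relocations of blocks of V₁ ∪ ⋯ ∪ V_k; that is, f_nonBG(V₁ ∪ ⋯ ∪ V_k) ≥ k. -/

import Mathlib

/-- A configuration of the BRP: each stack holds a list of blocks, bottom to top. -/
abbrev Config (B S : ℕ) := Fin S → List (Fin B)

/-- Every block occurs exactly once among the stacks. -/
def IsConfig {B S : ℕ} (C : Config B S) : Prop :=
  ∀ b : Fin B, (∑ s : Fin S, (C s).count b) = 1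

/-- `a` lies strictly below `b` in stack `s` of `C`. -/
def StrictlyBelow {B S : ℕ} (C : Config B S) (s : Fin S) (a b : Fin B) : Prop :=
  ∃ i j : ℕ, i < j ∧ (C s)[i]? = some a ∧ (C s)[j]? = some b

/-- A block is badly placed if some smaller-labelled block lies below it in its stack. -/
def BadlyPlaced {B S : ℕ} (C : Config B S) (b : Fin B) : Prop :=
  ∃ s a, a < b ∧ StrictlyBelow C s a b

/-- Moves: retrieve the top block of a stack, or relocate the top block of one
stack onto another stack. -/
inductive Move (S : ℕ) where
  | retrieve (s : Fin S)
  | relocate (src dst : Fin S)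

def applyMove {B S : ℕ} (C : Config B S) : Move S → Config B S
  | .retrieve s => Function.update C s (C s).dropLast
  | .relocate src dst =>
    match (C src).getLast? with
    | some b =>
      let C' := Function.update C src (C src).dropLast
      Function.update C' dst (C' dst ++ [b])
    | none => C

def Enabled {B S : ℕ} (C : Config B S) : Move S → Prop
  | .retrieve s => ∃ b, (C s).getLast? = some b ∧ ∀ (s' : Fin S), ∀ b' ∈ C s', b ≤ b'
  | .relocate src dst => src ≠ dst ∧ C src ≠ []

def play {B S : ℕ} (C : Config B S) : List (Move S) → Config B S
  | [] => C
  | m :: ms => play (applyMove C m) ms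

def AllEnabled {B S : ℕ} (C : Config B S) : List (Move S) → Prop
  | [] => True
  | m :: ms => Enabled C m ∧ AllEnabled (applyMove C m) ms

/-- A feasible move sequence: every move is enabled and at the end all blocks
have been retrieved. -/
def Feasible {B S : ℕ} (C : Config B S) (ms : List (Move S)) : Prop :=
  AllEnabled C ms ∧ ∀ s, play C ms s = []

/-- `b` is the block moved by `m` (a relocation) performed in configuration `C`. -/
def MovedBlock {B S : ℕ} (C : Config B S) (m : Move S) (b : Fin B) : Prop :=
  ∃ src dst, m = .relocate src dst ∧ src ≠ dst ∧ (C src).getLast? = some b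

/-- The four types of relocation moves. -/
inductive MType where
  | BB | BG | GB | GG

/-- The relocation `m`, moving block `b` from configuration `C`, has the given type. -/
def MTypeOf {B S : ℕ} (C : Config B S) (m : Move S) (b : Fin B) : MType → Prop
  | .BB => BadlyPlaced C b ∧ BadlyPlaced (applyMove C m) b
  | .BG => BadlyPlaced C b ∧ ¬ BadlyPlaced (applyMove C m) b
  | .GB => ¬ BadlyPlaced C b ∧ BadlyPlaced (applyMove C m) b
  | .GG => ¬ BadlyPlaced C b ∧ ¬ BadlyPlaced (applyMove C m) b

/-- `m` is a relocation of a block of `𝔅`. -/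
def RelocIn {B S : ℕ} (𝔅 : Set (Fin B)) (C : Config B S) (m : Move S) : Prop :=
  ∃ b ∈ 𝔅, MovedBlock C m b

/-- `m` is a relocation of a block of `𝔅` of type `mt`. -/
def RelocTypeIn {B S : ℕ} (mt : MType) (𝔅 : Set (Fin B)) (C : Config B S) (m : Move S) : Prop :=
  ∃ b ∈ 𝔅, MovedBlock C m b ∧ MTypeOf C m b mt

/-- `m` is a non-BG relocation of a block of `𝔅`. -/
def RelocNonBGIn {B S : ℕ} (𝔅 : Set (Fin B)) (C : Config B S) (m : Move S) : Prop :=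
  ∃ b ∈ 𝔅, MovedBlock C m b ∧ ¬ MTypeOf C m b MType.BG

/-- Count the moves of a sequence satisfying `P` (evaluated in the configuration
in which each move is performed). -/
noncomputable def countMoves {B S : ℕ} (P : Config B S → Move S → Prop) :
    Config B S → List (Move S) → ℕ
  | _, [] => 0
  | C, m :: ms =>
    (@ite ℕ (P C m) (Classical.propDecidable _) 1 0) + countMoves P (applyMove C m) ms

/-- Minimum over feasible move sequences of the number of moves satisfying `P`. -/
noncomputable def fMin {B S : ℕ} (C : Config B S) (P : Config B S → Move S → Prop) : ℕ :=
  sInf { n | ∃ ms, Feasible C ms ∧ countMoves P C ms = n }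

/-- `f(𝔅)`: least number of relocations applied to blocks of `𝔅`. -/
noncomputable def fRel {B S : ℕ} (C : Config B S) (𝔅 : Set (Fin B)) : ℕ :=
  fMin C (RelocIn 𝔅)

/-- `f_mt(𝔅)`: least number of type-`mt` relocations applied to blocks of `𝔅`. -/
noncomputable def fTyp {B S : ℕ} (C : Config B S) (mt : MType) (𝔅 : Set (Fin B)) : ℕ :=
  fMin C (RelocTypeIn mt 𝔅)

/-- `f_nonBG(𝔅)`: least number of non-BG relocations applied to blocks of `𝔅`. -/
noncomputable def fNonBG {B S : ℕ} (C : Config B S) (𝔅 : Set (Fin B)) : ℕ :=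
  fMin C (RelocNonBGIn 𝔅)

/-- The top 1st layer: the topmost block of each stack. -/
def TopLayer {B S : ℕ} (C : Config B S) : Set (Fin B) :=
  {b | ∃ s, (C s).getLast? = some b}

/-- The top `k` layers: the topmost `k` blocks of every stack. -/
def TopK {B S : ℕ} (C : Config B S) (k : ℕ) : Set (Fin B) :=
  {b | ∃ s, b ∈ (C s).drop ((C s).length - k)}

/-- The top `j`-th layer: the `j`-th block from the top of every stack. -/
def TopJth {B S : ℕ} (C : Config B S) (j : ℕ) : Set (Fin B) :=
  {b | ∃ s, (C s)[(C s).length - j]? = some b}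

/-- A virtual layer: a set of blocks containing exactly one block from each stack. -/
def VirtualLayer {B S : ℕ} (C : Config B S) (V : Set (Fin B)) : Prop :=
  ∀ s : Fin S, ∃! b : Fin B, b ∈ V ∧ b ∈ C s

/-- `a` lies at or below the `V`-block of stack `s`. -/
def AtOrBelowLayer {B S : ℕ} (C : Config B S) (V : Set (Fin B)) (s : Fin S) (a : Fin B) : Prop :=
  ∃ b j, b ∈ V ∧ (C s)[j]? = some b ∧ a ∈ (C s).take (j + 1)

/-- `V` is a virtual layer satisfying the conditions of Property 5:
(1) in some stack, a block strictly below the `V`-block of that stack has a smaller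
label than every block of `V`; (2) every badly placed block of `V` has a label
strictly greater than the minimum label present in stack `s` after deleting all
blocks strictly above the `V`-block of `s`, for every stack `s`. -/
def P5 {B S : ℕ} (C : Config B S) (V : Set (Fin B)) : Prop :=
  VirtualLayer C V ∧
  (∃ s a b, b ∈ V ∧ StrictlyBelow C s a b ∧ ∀ c ∈ V, a < c) ∧
  (∀ b ∈ V, BadlyPlaced C b → ∀ s : Fin S, ∃ a, AtOrBelowLayer C V s a ∧ a < b)

/-- A pair of virtual layers `V₁` (upper), `V₂` (lower) with shared well-placed
block `bstar` satisfying the conditions of Property 7. -/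
def P7 {B S : ℕ} (C : Config B S) (V₁ V₂ : Set (Fin B)) (bstar : Fin B) : Prop :=
  V₁ ∩ V₂ = {bstar} ∧
  ¬ BadlyPlaced C bstar ∧
  (∀ s : Fin S, bstar ∉ C s →
    ∃ b₁ b₂, b₁ ∈ V₁ ∧ b₂ ∈ V₂ ∧ StrictlyBelow C s b₂ b₁) ∧
  P5 C V₁ ∧ P5 C V₂ ∧
  (∀ s : Fin S, ∃ a, AtOrBelowLayer C V₁ s a ∧ a ≤ bstar) ∧
  (∃ s : Fin S, ∀ a, AtOrBelowLayer C V₁ s a → bstar ≤ a)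

/-- Push blocks one by one onto the indicated stacks. -/
def pushAll {B S : ℕ} (C : Config B S) : List (Fin B × Fin S) → Config B S
  | [] => C
  | p :: rest => pushAll (Function.update C p.2 (C p.2 ++ [p.1])) rest

/-- The blocks lying strictly above position `i` of stack `s`, listed from the
top of the stack downward (the processing order of the experiment). -/
def aboveList {B S : ℕ} (C : Config B S) (s : Fin S) (i : ℕ) : List (Fin B) :=
  ((C s).drop (i + 1)).reverse

/-- The arrangement resulting from the experiment of Property 4: the blocks above
position `i` of stack `s` are relocated exactly once, from the top downward, onto
the stacks listed in `ds`. -/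
def expResult {B S : ℕ} (C : Config B S) (s : Fin S) (i : ℕ) (ds : List (Fin S)) :
    Config B S :=
  pushAll (Function.update C s ((C s).take (i + 1))) ((aboveList C s i).zip ds)

/-- The condition of Property 4 (target block at position `i` of stack `sStar`):
in every experiment, some relocated block ends badly placed. -/
def P4Cond {B S : ℕ} (C : Config B S) (sStar : Fin S) (i : ℕ) : Prop :=
  ∀ ds : List (Fin S), ds.length = (aboveList C sStar i).length →
    (∀ d ∈ ds, d ≠ sStar) →
    ∃ b ∈ aboveList C sStar i, BadlyPlaced (expResult C sStar i ds) b

/-- The set `𝔅⁴`: the blocks above the target block together with, for each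
nonempty stack other than the target's stack, its block of minimum label. -/
def B4Set {B S : ℕ} (C : Config B S) (sStar : Fin S) (i : ℕ) : Set (Fin B) :=
  {b | b ∈ aboveList C sStar i} ∪
  {b | ∃ s, s ≠ sStar ∧ b ∈ C s ∧ ∀ b' ∈ C s, b ≤ b'}

/-- The number of direct blockages: adjacent pairs in a stack whose upper block
has a strictly larger label. -/
def directBlockages {B S : ℕ} (C : Config B S) : ℕ :=
  ∑ s : Fin S, (((C s).zip (C s).tail).filter (fun p => decide (p.1 < p.2))).length

/-- The number of relocations in a move sequence. -/
def relocCount {S : ℕ} (ms : List (Move S)) : ℕ :=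
  (ms.filter (fun m => match m with | Move.relocate _ _ => true | Move.retrieve _ => false)).length

/-- The minimum number of relocations over all feasible move sequences. -/
noncomputable def fAll {B S : ℕ} (C : Config B S) : ℕ :=
  sInf { n | ∃ ms, Feasible C ms ∧ relocCount ms = n }

/-- `g(L)`: `L` plus the minimum number of direct blockages over all partial
plans with exactly `L` relocations. -/
noncomputable def gIter {B S : ℕ} (C : Config B S) (L : ℕ) : ℕ :=
  L + sInf { d | ∃ ms : List (Move S), AllEnabled C ms ∧ relocCount ms = L ∧
      d = directBlockages (play C ms) }

namespace BRP6
variable {B S : ℕ}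

def AtMostOne (D : Config B S) : Prop := ∀ b : Fin B, (∑ s : Fin S, (D s).count b) ≤ 1

lemma count_le_one {D : Config B S} (h : AtMostOne D) (s : Fin S) (b : Fin B) :
    (D s).count b ≤ 1 :=
  le_trans (Finset.single_le_sum (f := fun s => (D s).count b)
    (fun _ _ => Nat.zero_le _) (Finset.mem_univ s)) (h b)

lemma mem_unique {D : Config B S} (h : AtMostOne D) {b : Fin B} {s₁ s₂ : Fin S}
    (h1 : b ∈ D s₁) (h2 : b ∈ D s₂) : s₁ = s₂ := by
  by_contra hne
  have hsub : ({s₁, s₂} : Finset (Fin S)) ⊆ Finset.univ := Finset.subset_univ _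
  have := Finset.sum_le_sum_of_subset (f := fun s => (D s).count b) hsub
  rw [Finset.sum_pair hne] at this
  have c1 : 1 ≤ (D s₁).count b := List.count_pos_iff.mpr h1
  have c2 : 1 ≤ (D s₂).count b := List.count_pos_iff.mpr h2
  have := le_trans this (h b)
  omega

lemma sum_update (f : Config B S) (t : Fin S) (L : List (Fin B)) (μ : List (Fin B) → ℕ) :
    ∑ s : Fin S, μ ((Function.update f t L) s)
      = μ L + ∑ s ∈ Finset.univ.erase t, μ (f s) := by
  have : ∀ s : Fin S, μ ((Function.update f t L) s)
      = Function.update (fun j => μ (f j)) t (μ L) s :=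
    fun s => Function.apply_update (fun _ l => μ l) f t L s
  rw [Finset.sum_congr rfl (fun s _ => this s),
    Finset.sum_update_of_mem (Finset.mem_univ t), Finset.sdiff_singleton_eq_erase]

lemma getLast?_decomp {l : List (Fin B)} {b : Fin B} (h : l.getLast? = some b) :
    l.dropLast ++ [b] = l := by
  have hne : l ≠ [] := by rintro rfl; simp at h
  have := List.dropLast_append_getLast hne
  rw [List.getLast?_eq_getLast hne, Option.some_inj] at h
  rw [← h]; exact this

lemma sum_relocate (μ : List (Fin B) → ℕ) (hadd : ∀ l l', μ (l ++ l') = μ l + μ l')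
    (D : Config B S) (src dst : Fin S) :
    ∑ s : Fin S, μ ((applyMove D (.relocate src dst)) s) = ∑ s : Fin S, μ (D s) := by
  cases hg : (D src).getLast? with
  | none => simp only [applyMove, hg]
  | some b₀ =>
    simp only [applyMove, hg]
    set E := Function.update D src (D src).dropLast with hE
    rw [sum_update]
    have h1 : ∑ s : Fin S, μ (E s) = μ ((D src).dropLast) + ∑ s ∈ Finset.univ.erase src, μ (D s) :=
      sum_update D src _ μ
    have h2 : ∑ s : Fin S, μ (D s) = μ (D src) + ∑ s ∈ Finset.univ.erase src, μ (D s) :=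
      (Finset.add_sum_erase _ _ (Finset.mem_univ src)).symm
    have h3 : ∑ s : Fin S, μ (E s) = μ (E dst) + ∑ s ∈ Finset.univ.erase dst, μ (E s) :=
      (Finset.add_sum_erase _ _ (Finset.mem_univ dst)).symm
    have h4 : μ (D src) = μ ((D src).dropLast) + μ [b₀] := by
      conv_lhs => rw [← getLast?_decomp hg]
      rw [hadd]
    rw [hadd]
    omega

lemma sum_count_applyMove (D : Config B S) (m : Move S) (b : Fin B) :
    (∑ s : Fin S, ((applyMove D m) s).count b) ≤ ∑ s : Fin S, (D s).count b := by
  cases m with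
  | retrieve s =>
    simp only [applyMove]
    apply Finset.sum_le_sum
    intro t _
    rcases eq_or_ne t s with rfl|h
    · rw [Function.update_self]
      exact List.Sublist.count_le b (List.dropLast_sublist _)
    · rw [Function.update_of_ne h]
  | relocate src dst =>
    exact le_of_eq (sum_relocate (fun l => l.count b) (fun l l' => List.count_append ..) D src dst)

lemma atMostOne_applyMove {D : Config B S} (h : AtMostOne D) (m : Move S) :
    AtMostOne (applyMove D m) :=
  fun b => le_trans (sum_count_applyMove D m b) (h b)

lemma mem_applyMove {D : Config B S} {m : Move S} {b : Fin B} {s : Fin S}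
    (h : b ∈ applyMove D m s) : ∃ t, b ∈ D t := by
  cases m with
  | retrieve u =>
    simp only [applyMove] at h
    rcases eq_or_ne s u with rfl|hne
    · rw [Function.update_self] at h
      exact ⟨s, (List.dropLast_sublist _).mem h⟩
    · rw [Function.update_of_ne hne] at h; exact ⟨s, h⟩
  | relocate src dst =>
    cases hg : (D src).getLast? with
    | none => simp only [applyMove, hg] at h; exact ⟨s, h⟩
    | some b₀ =>
      simp only [applyMove, hg] at h
      rcases eq_or_ne s dst with rfl|hd
      · rw [Function.update_self] at h
        rcases List.mem_append.mp h with h|h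
        · rcases eq_or_ne s src with rfl|hs
          · rw [Function.update_self] at h
            exact ⟨s, (List.dropLast_sublist _).mem h⟩
          · rw [Function.update_of_ne hs] at h; exact ⟨s, h⟩
        · simp only [List.mem_singleton] at h
          exact ⟨src, h ▸ List.mem_of_getLast? hg⟩
      · rw [Function.update_of_ne hd] at h
        rcases eq_or_ne s src with rfl|hs
        · rw [Function.update_self] at h
          exact ⟨s, (List.dropLast_sublist _).mem h⟩
        · rw [Function.update_of_ne hs] at h; exact ⟨s, h⟩

lemma prefix_dropLast {P L : List (Fin B)} (h : P <+: L) : P <+: L.dropLast ∨ L = P := by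
  obtain ⟨R, rfl⟩ := h
  rcases eq_or_ne R [] with rfl|hR
  · right; simp
  · left; rw [List.dropLast_append_of_ne_nil hR]; exact ⟨R.dropLast, rfl⟩

lemma play_append (D : Config B S) (xs ys : List (Move S)) :
    play D (xs ++ ys) = play (play D xs) ys := by
  induction xs generalizing D with
  | nil => rfl
  | cons m ms ih => simp only [List.cons_append, play]; exact ih _

lemma allEnabled_append {D : Config B S} {xs ys : List (Move S)}
    (h1 : AllEnabled D xs) (h2 : AllEnabled (play D xs) ys) : AllEnabled D (xs ++ ys) := by
  induction xs generalizing D with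
  | nil => exact h2
  | cons m ms ih =>
    exact ⟨h1.1, ih h1.2 h2⟩

lemma mem_play : ∀ (ms : List (Move S)) (D : Config B S) (s : Fin S) (b : Fin B),
    b ∈ play D ms s → ∃ t, b ∈ D t
  | [], _, s, _, h => ⟨s, h⟩
  | m :: ms, D, s, b, h => by
    obtain ⟨t, ht⟩ := mem_play ms _ s b h
    exact mem_applyMove ht

end BRP6
namespace BRP6
variable {B S : ℕ}

lemma relocate_src_eq {D : Config B S} {s t : Fin S} (hst : s ≠ t) (hne : D s ≠ []) :
    (applyMove D (.relocate s t)) s = (D s).dropLast := by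
  cases hg : (D s).getLast? with
  | none => exact absurd (List.getLast?_eq_none_iff.mp hg) hne
  | some b₀ =>
    simp only [applyMove, hg]
    rw [Function.update_of_ne hst, Function.update_self]

lemma dig (s t : Fin S) (hst : s ≠ t) :
    ∀ (r : ℕ) (D : Config B S), r < (D s).length →
    AllEnabled D (List.replicate r (.relocate s t)) ∧
    (play D (List.replicate r (.relocate s t))) s = (D s).take ((D s).length - r)
  | 0, D, _ => by simp [AllEnabled, play, List.take_length]
  | (r+1), D, h => by
    have hne : D s ≠ [] := by
      intro h0; rw [h0] at h; simp at h
    have hen : Enabled D (.relocate s t) := ⟨hst, hne⟩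
    have hsrc : (applyMove D (.relocate s t)) s = (D s).dropLast := relocate_src_eq hst hne
    have hr : r < ((applyMove D (.relocate s t)) s).length := by
      rw [hsrc, List.length_dropLast]; omega
    obtain ⟨h1, h2⟩ := dig s t hst r (applyMove D (.relocate s t)) hr
    rw [hsrc] at h2
    rw [List.replicate_succ]
    refine ⟨⟨hen, h1⟩, ?_⟩
    show play (applyMove D (.relocate s t)) _ s = _
    rw [h2, List.length_dropLast, List.dropLast_eq_take, List.take_take]
    congr 1
    omega

lemma sum_length_play_replicate (s t : Fin S) :
    ∀ (r : ℕ) (D : Config B S),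
    ∑ u : Fin S, ((play D (List.replicate r (.relocate s t))) u).length
      = ∑ u : Fin S, (D u).length
  | 0, D => rfl
  | (r+1), D => by
    rw [List.replicate_succ]
    show ∑ u : Fin S, ((play (applyMove D (.relocate s t)) (List.replicate r _)) u).length = _
    rw [sum_length_play_replicate s t r (applyMove D (.relocate s t))]
    exact sum_relocate List.length (fun l l' => List.length_append) D s t

lemma exists_feasible (hS : 2 ≤ S) :
    ∀ (n : ℕ) (D : Config B S), (∑ s : Fin S, (D s).length) ≤ n → ∃ ms, Feasible D ms := by
  intro n
  induction n with
  | zero =>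
    intro D h
    refine ⟨[], trivial, fun s => ?_⟩
    show D s = []
    have h1 := Finset.single_le_sum (f := fun s => (D s).length)
      (fun _ _ => Nat.zero_le _) (Finset.mem_univ s)
    have h2 : (D s).length ≤ 0 := le_trans h1 h
    exact List.eq_nil_of_length_eq_zero (by omega)
  | succ n ih =>
    intro D h
    by_cases hemp : ∀ s, D s = []
    · exact ⟨[], trivial, hemp⟩
    push_neg at hemp
    obtain ⟨s₀, hs₀⟩ := hemp
    classical
    have hPne : (Finset.univ.filter (fun b : Fin B => ∃ s, b ∈ D s)).Nonempty := by
      obtain ⟨b, hb⟩ := List.exists_mem_of_ne_nil _ hs₀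
      exact ⟨b, Finset.mem_filter.mpr ⟨Finset.mem_univ _, s₀, hb⟩⟩
    obtain ⟨s, hbs⟩ : ∃ s, (Finset.univ.filter (fun b : Fin B => ∃ s, b ∈ D s)).min' hPne ∈ D s :=
      (Finset.mem_filter.mp (Finset.min'_mem _ hPne)).2
    set b := (Finset.univ.filter (fun b : Fin B => ∃ s, b ∈ D s)).min' hPne with hbdef
    have hmin : ∀ s' : Fin S, ∀ b' ∈ D s', b ≤ b' := fun s' b' h' =>
      Finset.min'_le _ _ (Finset.mem_filter.mpr ⟨Finset.mem_univ _, s', h'⟩)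
    obtain ⟨t, hts⟩ : ∃ t : Fin S, t ≠ s :=
      Fintype.exists_ne_of_one_lt_card (by simp; omega) s
    obtain ⟨idx, hidxlt, hidx⟩ := List.getElem_of_mem hbs
    obtain ⟨hen1, hplay1⟩ := dig s t (Ne.symm hts) ((D s).length - (idx + 1)) D (by omega)
    have hD₁s : play D (List.replicate ((D s).length - (idx + 1)) (.relocate s t)) s
        = (D s).take (idx + 1) := by
      rw [hplay1]; congr 1; omega
    have hD₁top : (play D (List.replicate ((D s).length - (idx + 1)) (.relocate s t)) s).getLast?
        = some b := by
      rw [hD₁s, List.getLast?_eq_getElem?]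
      have hlen : ((D s).take (idx+1)).length = idx + 1 := by
        rw [List.length_take]; omega
      rw [hlen]
      simp only [Nat.add_sub_cancel]
      rw [List.getElem?_take]
      simp [Nat.lt_succ_self, List.getElem?_eq_getElem hidxlt, hidx]
    have hen2 : Enabled (play D (List.replicate ((D s).length - (idx + 1)) (.relocate s t)))
        (.retrieve s) := by
      refine ⟨b, hD₁top, fun s' b' hb' => ?_⟩
      obtain ⟨u, hu⟩ := mem_play _ D s' b' hb'
      exact hmin u b' hu
    have hlen1 : ∑ u : Fin S,
        ((play D (List.replicate ((D s).length - (idx + 1)) (.relocate s t))) u).length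
        = ∑ u : Fin S, (D u).length := sum_length_play_replicate s t _ D
    have hlen2 : ∑ u : Fin S,
        ((applyMove (play D (List.replicate ((D s).length - (idx + 1)) (.relocate s t)))
          (.retrieve s)) u).length ≤ n := by
      have hup : ∑ u : Fin S,
          ((applyMove (play D (List.replicate ((D s).length - (idx + 1)) (.relocate s t)))
            (.retrieve s)) u).length
          = ((play D (List.replicate ((D s).length - (idx + 1)) (.relocate s t)) s).dropLast).length
            + ∑ u ∈ Finset.univ.erase s,
              ((play D (List.replicate ((D s).length - (idx + 1)) (.relocate s t))) u).length :=
        sum_update _ s _ List.length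
      have h2 : ∑ u : Fin S,
          ((play D (List.replicate ((D s).length - (idx + 1)) (.relocate s t))) u).length
          = (play D (List.replicate ((D s).length - (idx + 1)) (.relocate s t)) s).length
            + ∑ u ∈ Finset.univ.erase s,
              ((play D (List.replicate ((D s).length - (idx + 1)) (.relocate s t))) u).length :=
        (Finset.add_sum_erase _ _ (Finset.mem_univ s)).symm
      have h3 : (play D (List.replicate ((D s).length - (idx + 1)) (.relocate s t)) s).length
          = idx + 1 := by
        rw [hD₁s, List.length_take]; omega
      rw [hup, List.length_dropLast]
      omega
    obtain ⟨ms₂, hfe2, hfin2⟩ := ih _ hlen2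
    refine ⟨List.replicate ((D s).length - (idx + 1)) (.relocate s t) ++ (.retrieve s :: ms₂),
      ?_, ?_⟩
    · exact allEnabled_append hen1 ⟨hen2, hfe2⟩
    · intro u
      rw [play_append]
      exact hfin2 u

end BRP6
namespace BRP6
variable {B S : ℕ}

lemma countMoves_cons_of {P : Config B S → Move S → Prop} {D : Config B S} {m : Move S}
    (ms : List (Move S)) (hP : P D m) :
    countMoves P D (m :: ms) = 1 + countMoves P (applyMove D m) ms := by
  simp only [countMoves]
  rw [if_pos hP]

lemma countMoves_cons_le (P : Config B S → Move S → Prop) (D : Config B S) (m : Move S)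
    (ms : List (Move S)) :
    countMoves P (applyMove D m) ms ≤ countMoves P D (m :: ms) := by
  simp only [countMoves]
  exact Nat.le_add_left _ _

lemma key {k : ℕ} (V : Fin k → Set (Fin B))
    (hdisj : ∀ i j, i ≠ j → Disjoint (V i) (V j))
    (pref : Fin k → Fin S → List (Fin B)) (vb : Fin k → Fin S → Fin B)
    (hlast : ∀ i s, (pref i s).getLast? = some (vb i s))
    (hvbV : ∀ i s, vb i s ∈ V i)
    (hhome : ∀ i b, b ∈ V i → ∃ s, b = vb i s)
    (hF2 : ∀ i, ∃ s a, a ∈ pref i s ∧ ∀ c ∈ V i, a < c)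
    (hF3 : ∀ i src a b, b ∈ V i → a < b →
      (∃ x y : ℕ, x < y ∧ (pref i src)[x]? = some a ∧ (pref i src)[y]? = some b) →
      ∀ dst, ∃ a' ∈ pref i dst, a' < b) :
    ∀ (ms : List (Move S)) (D : Config B S) (I : Finset (Fin k)),
      AtMostOne D → (∀ i ∈ I, ∀ s, pref i s <+: D s) →
      AllEnabled D ms → (∀ s, play D ms s = []) →
      I.card ≤ countMoves (RelocNonBGIn (⋃ i, V i)) D ms := by
  intro ms
  induction ms with
  | nil =>
    intro D I h1 hinv _ hplay
    rcases I.eq_empty_or_nonempty with rfl|⟨i, hi⟩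
    · simp
    obtain ⟨s, a, ha, _⟩ := hF2 i
    have hp := hinv i hi s
    have hDs : D s = [] := hplay s
    rw [hDs] at hp
    rw [List.prefix_nil.mp hp] at ha
    simp at ha
  | cons m ms ih =>
    intro D I h1 hinv hen hplay
    have hAM' := atMostOne_applyMove h1 m
    have hen' := hen.2
    have hplay' : ∀ s, play (applyMove D m) ms s = [] := hplay
    by_cases hcase : ∃ i ∈ I, ∃ b ∈ V i, MovedBlock D m b
    · obtain ⟨i, hiI, b, hbV, hmb⟩ := hcase
      obtain ⟨src, dst, rfl, hsd, hg⟩ := hmb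
      obtain ⟨sb, hbeq⟩ := hhome i b hbV
      have hbpref : b ∈ pref i sb := hbeq ▸ List.mem_of_getLast? (hlast i sb)
      have hbDsb : b ∈ D sb := (hinv i hiI sb).subset hbpref
      have hbDsrc : b ∈ D src := List.mem_of_getLast? hg
      have hsbsrc : sb = src := mem_unique h1 hbDsb hbDsrc
      subst hsbsrc
      obtain ⟨R, hR⟩ := hinv i hiI sb
      have hReq : R = [] := by
        by_contra hRne
        have hgR : R.getLast? = some b := by
          rw [← hR, List.getLast?_append_of_ne_nil _ hRne] at hg
          exact hg
        have hbR : b ∈ R := List.mem_of_getLast? hgR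
        have hcount : 2 ≤ (D sb).count b := by
          rw [← hR, List.count_append]
          have c1 := List.count_pos_iff.mpr hbpref
          have c2 := List.count_pos_iff.mpr hbR
          omega
        have := count_le_one h1 sb b
        omega
      have hDsrc : D sb = pref i sb := by rw [← hR, hReq, List.append_nil]
      have hmove : RelocNonBGIn (⋃ j, V j) D (.relocate sb dst) := by
        refine ⟨b, Set.mem_iUnion.mpr ⟨i, hbV⟩, ⟨sb, dst, rfl, hsd, hg⟩, ?_⟩
        rintro ⟨hBP, hnBP⟩
        apply hnBP
        obtain ⟨s', a, halt, x, y, hxy, hx, hy⟩ := hBP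
        have hbs' : b ∈ D s' := by
          rcases List.getElem?_eq_some_iff.mp hy with ⟨hylt, hyy⟩
          exact hyy ▸ List.getElem_mem hylt
        have heq : s' = sb := mem_unique h1 hbs' hbDsrc
        rw [heq, hDsrc] at hx hy
        obtain ⟨a', ha'p, ha'lt⟩ := hF3 i sb a b hbV halt ⟨x, y, hxy, hx, hy⟩ dst
        have hnew : (applyMove D (.relocate sb dst)) dst = D dst ++ [b] := by
          simp only [applyMove, hg]
          rw [Function.update_self, Function.update_of_ne (Ne.symm hsd)]
        have ha'D : a' ∈ D dst := (hinv i hiI dst).subset ha'p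
        obtain ⟨p, hplt, hpe⟩ := List.getElem_of_mem ha'D
        refine ⟨dst, a', ha'lt, p, (D dst).length, hplt, ?_, ?_⟩
        · rw [hnew, List.getElem?_append]
          simp only [hplt, if_pos]
          rw [List.getElem?_eq_getElem hplt, hpe]
        · rw [hnew]
          exact List.getElem?_concat_length
      rw [countMoves_cons_of ms hmove]
      have hinv' : ∀ j ∈ I.erase i, ∀ s, pref j s <+: (applyMove D (.relocate sb dst)) s := by
        intro j hj s
        have hjI := Finset.mem_of_mem_erase hj
        have hji : j ≠ i := Finset.ne_of_mem_erase hj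
        have hp := hinv j hjI s
        simp only [applyMove, hg]
        rcases eq_or_ne s dst with rfl|hd
        · rw [Function.update_self, Function.update_of_ne (Ne.symm hsd)]
          exact hp.trans (List.prefix_append _ _)
        · rw [Function.update_of_ne hd]
          rcases eq_or_ne s sb with rfl|hs2
          · rw [Function.update_self]
            rcases prefix_dropLast hp with h|h
            · exact h
            · exfalso
              have hh : (pref j s).getLast? = some b := h ▸ hg
              rw [hlast j s, Option.some_inj] at hh
              exact Set.disjoint_left.mp (hdisj j i hji) (hh ▸ hvbV j s) hbV
          · rw [Function.update_of_ne hs2]; exact hp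
      have hih := ih (applyMove D (.relocate sb dst)) (I.erase i) hAM' hinv' hen' hplay'
      have hc := Finset.card_erase_add_one hiI
      omega
    · push_neg at hcase
      have hinv' : ∀ i ∈ I, ∀ s, pref i s <+: (applyMove D m) s := by
        intro i hi s
        have hp := hinv i hi s
        cases m with
        | retrieve u =>
          simp only [applyMove]
          rcases eq_or_ne s u with rfl|hu
          · rw [Function.update_self]
            rcases prefix_dropLast hp with h|h
            · exact h
            · exfalso
              obtain ⟨b', hg', hminall⟩ := hen.1
              rw [h, hlast i s, Option.some_inj] at hg'
              obtain ⟨s₁, a, hap, halt⟩ := hF2 i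
              have haD : a ∈ D s₁ := (hinv i hi s₁).subset hap
              have h1' := hminall s₁ a haD
              have h2' := halt (vb i s) (hvbV i s)
              rw [hg'] at h2'
              exact absurd (lt_of_le_of_lt h1' h2') (lt_irrefl b')
          · rw [Function.update_of_ne hu]; exact hp
        | relocate u v =>
          obtain ⟨huv, hune⟩ := hen.1
          cases hg : (D u).getLast? with
          | none => exact absurd (List.getLast?_eq_none_iff.mp hg) hune
          | some b₀ =>
            simp only [applyMove, hg]
            rcases eq_or_ne s v with rfl|hv
            · rw [Function.update_self, Function.update_of_ne (Ne.symm huv)]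
              exact hp.trans (List.prefix_append _ _)
            · rw [Function.update_of_ne hv]
              rcases eq_or_ne s u with rfl|hu2
              · rw [Function.update_self]
                rcases prefix_dropLast hp with h|h
                · exact h
                · exfalso
                  have hh : (pref i s).getLast? = some b₀ := h ▸ hg
                  rw [hlast i s, Option.some_inj] at hh
                  exact hcase i hi b₀ (hh ▸ hvbV i s) ⟨s, v, rfl, huv, hg⟩
              · rw [Function.update_of_ne hu2]; exact hp
      have hih := ih (applyMove D m) I hAM' hinv' hen' hplay'
      exact hih.trans (countMoves_cons_le ..)

end BRP6
/-- Corollary 1, Property 6: if `V₁, …, V_k` are pairwise disjoint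
virtual layers each satisfying the conditions of Property 5, then every feasible
move sequence contains at least `k` non-BG relocations of blocks of
`V₁ ∪ ⋯ ∪ V_k`; that is, `f_nonBG(V₁ ∪ ⋯ ∪ V_k) ≥ k`. -/
theorem brp_property6 {B S : ℕ} (hS : 2 ≤ S) (hB : 1 ≤ B)
    (C : Config B S) (hC : IsConfig C) (hne : ∀ s, C s ≠ [])
    (k : ℕ) (V : Fin k → Set (Fin B))
    (hdisj : ∀ i j, i ≠ j → Disjoint (V i) (V j))
    (h5 : ∀ i, P5 C (V i)) :
    (∀ ms, Feasible C ms → k ≤ countMoves (RelocNonBGIn (⋃ i, V i)) C ms) ∧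
    k ≤ fNonBG C (⋃ i, V i) := by
  classical
  have hmem : ∀ (l : List (Fin B)) (n : ℕ) (a : Fin B), l[n]? = some a → a ∈ l := by
    intro l n a h
    rcases List.getElem?_eq_some_iff.mp h with ⟨h1, h2⟩
    exact h2 ▸ List.getElem_mem h1
  have htak : ∀ (l : List (Fin B)) (n x : ℕ) (a : Fin B),
      (l.take n)[x]? = some a → l[x]? = some a ∧ x < n := by
    intro l n x a h
    rw [List.getElem?_take] at h
    by_cases hx : x < n
    · exact ⟨by simpa [hx] using h, hx⟩
    · simp [hx] at h
  have hNodup : ∀ s, (C s).Nodup := fun s =>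
    List.nodup_iff_count_le_one.mpr (fun b =>
      le_trans (Finset.single_le_sum (f := fun s => (C s).count b)
        (fun _ _ => Nat.zero_le _) (Finset.mem_univ s)) (le_of_eq (hC b)))
  have hAM : BRP6.AtMostOne C := fun b => le_of_eq (hC b)
  have hex : ∀ (i : Fin k) (s : Fin S), ∃ b, (b ∈ V i ∧ b ∈ C s) ∧
      ∀ y, (y ∈ V i ∧ y ∈ C s) → y = b := fun i s => (h5 i).1 s
  choose vb hvb hvbu using hex
  have hvbV : ∀ i s, vb i s ∈ V i := fun i s => (hvb i s).1
  have hvbC : ∀ i s, vb i s ∈ C s := fun i s => (hvb i s).2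
  have hexj : ∀ (i : Fin k) (s : Fin S), ∃ j : ℕ, (C s)[j]? = some (vb i s) := by
    intro i s
    obtain ⟨j, hj, e⟩ := List.getElem_of_mem (hvbC i s)
    exact ⟨j, by rw [List.getElem?_eq_getElem hj, e]⟩
  choose jb hjb using hexj
  have hjlt : ∀ i s, jb i s < (C s).length := fun i s => by
    rcases List.getElem?_eq_some_iff.mp (hjb i s) with ⟨h, _⟩; exact h
  have hlast : ∀ i s, ((C s).take (jb i s + 1)).getLast? = some (vb i s) := by
    intro i s
    rw [List.getLast?_eq_getElem?]
    have hlen : ((C s).take (jb i s + 1)).length = jb i s + 1 := by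
      rw [List.length_take]
      have := hjlt i s
      omega
    rw [hlen]
    simp only [Nat.add_sub_cancel]
    rw [List.getElem?_take]
    simp [Nat.lt_succ_self, hjb i s]
  have hidxu : ∀ (i : Fin k) (s : Fin S) (j : ℕ), (C s)[j]? = some (vb i s) → j = jb i s := by
    intro i s j hj
    rcases List.getElem?_eq_some_iff.mp hj with ⟨hlt, _⟩
    exact (List.getElem?_inj hlt (hNodup s)).mp (by rw [hj, hjb i s])
  have hhome : ∀ (i : Fin k), ∀ b ∈ V i, ∃ s, b = vb i s := by
    intro i b hb
    have h1 : ∃ s, b ∈ C s := by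
      by_contra hno
      push_neg at hno
      have hz : ∀ s, (C s).count b = 0 := fun s => List.count_eq_zero.mpr (hno s)
      have hCb := hC b
      rw [Finset.sum_eq_zero (fun s _ => hz s)] at hCb
      exact absurd hCb (by omega)
    obtain ⟨s, hs⟩ := h1
    exact ⟨s, hvbu i s b ⟨hb, hs⟩⟩
  have hF2 : ∀ i, ∃ s, ∃ a ∈ (C s).take (jb i s + 1), ∀ c ∈ V i, a < c := by
    intro i
    obtain ⟨s, a, b, hbV, ⟨x, y, hxy, hx, hy⟩, hlt⟩ := (h5 i).2.1
    have hbeq : b = vb i s := hvbu i s b ⟨hbV, hmem _ _ _ hy⟩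
    have hyj : y = jb i s := hidxu i s y (hbeq ▸ hy)
    refine ⟨s, a, ?_, hlt⟩
    apply hmem _ x
    rw [List.getElem?_take]
    have : x < jb i s + 1 := by omega
    simp [this, hx]
  have hF3 : ∀ (i : Fin k) (src : Fin S) (a b : Fin B), b ∈ V i → a < b →
      (∃ x y : ℕ, x < y ∧ ((C src).take (jb i src + 1))[x]? = some a ∧
        ((C src).take (jb i src + 1))[y]? = some b) →
      ∀ dst, ∃ a' ∈ (C dst).take (jb i dst + 1), a' < b := by
    intro i src a b hbV halt ⟨x, y, hxy, hx, hy⟩ dst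
    obtain ⟨hx', _⟩ := htak _ _ _ _ hx
    obtain ⟨hy', _⟩ := htak _ _ _ _ hy
    have hBP : BadlyPlaced C b := ⟨src, a, halt, x, y, hxy, hx', hy'⟩
    obtain ⟨a', ⟨b'', j, hb''V, hj, hmemtake⟩, hlt'⟩ := (h5 i).2.2 b hbV hBP dst
    have hbeq : b'' = vb i dst := hvbu i dst b'' ⟨hb''V, hmem _ _ _ hj⟩
    have hjj : j = jb i dst := hidxu i dst j (hbeq ▸ hj)
    exact ⟨a', hjj ▸ hmemtake, hlt'⟩
  have hmain : ∀ ms, Feasible C ms → k ≤ countMoves (RelocNonBGIn (⋃ i, V i)) C ms := by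
    intro ms hfe
    have := BRP6.key V hdisj (fun i s => (C s).take (jb i s + 1)) vb hlast hvbV hhome hF2 hF3
      ms C Finset.univ hAM (fun i _ s => List.take_prefix _ _) hfe.1 hfe.2
    simpa using this
  refine ⟨hmain, ?_⟩
  obtain ⟨ms₀, hms₀⟩ := BRP6.exists_feasible hS (∑ s, (C s).length) C le_rfl
  rw [fNonBG, fMin]
  refine le_csInf ⟨countMoves (RelocNonBGIn (⋃ i, V i)) C ms₀, ms₀, hms₀, rfl⟩ ?_
  rintro n ⟨ms, hfe, rfl⟩
  exact hmain ms hfe
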